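/- Let A be a finite abelian group, S ⊆ A a Sidon set (i.e., every solution (x1,x2,x3,x4) ∈ S^4 of x1 + x2 = x3 + x4 satisfies x1 ∈ {x3, x4}), and t : A → ℂ a function vanishing outside S. Then (1/|A|) · Σ_{χ ∈ Â} |Σ_{x ∈ A} t(x) χ(x)|^4 = 2 · (Σ_{x ∈ A} |t(x)|^2)^2 − Σ_{x ∈ A} |t(x)|^4. -/

import Mathlib

open Finset Complex

theorem stmt_4 {A : Type*} [AddCommGroup A] [Fintype A] (S : Set A)
    (hSidon : ∀ x1 ∈ S, ∀ x2 ∈ S, ∀ x3 ∈ S, ∀ x4 ∈ S,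
      x1 + x2 = x3 + x4 → x1 = x3 ∨ x1 = x4)
    (t : A → ℂ) (ht : ∀ x ∉ S, t x = 0) :
    (1 / (Fintype.card A : ℝ)) *
        ∑ χ : AddChar A ℂ, ‖∑ x : A, t x * χ x‖ ^ 4 =
      2 * (∑ x : A, ‖t x‖ ^ 2) ^ 2 - ∑ x : A, ‖t x‖ ^ 4 := by
  classical
  set c := starRingEnd ℂ with hc
  -- term function on quadruples
  set term : A × A × A × A → ℂ :=
    fun q => t q.1 * t q.2.1 * c (t q.2.2.1) * c (t q.2.2.2) with hterm_def
  -- abs^4 as complex product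
  have habs4 : ∀ z : ℂ, ((‖z‖ ^ 4 : ℝ) : ℂ) = z * z * c z * c z := by
    intro z
    have : z * z * c z * c z = (z * c z) ^ 2 := by ring
    rw [this, Complex.mul_conj, Complex.normSq_eq_norm_sq]
    push_cast
    ring
  -- character identity
  have hchi : ∀ (χ : AddChar A ℂ) (x1 x2 x3 x4 : A),
      χ x1 * χ x2 * c (χ x3) * c (χ x4) = χ (x1 + x2 - x3 - x4) := by
    intro χ x1 x2 x3 x4
    rw [← AddChar.map_neg_eq_conj, ← AddChar.map_neg_eq_conj,
      ← AddChar.map_add_eq_mul, ← AddChar.map_add_eq_mul, ← AddChar.map_add_eq_mul]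
    congr 1
    abel
  -- expand the fourth power
  have expand : ∀ χ : AddChar A ℂ,
      ((‖∑ x : A, t x * χ x‖ ^ 4 : ℝ) : ℂ)
        = ∑ q : A × A × A × A, term q * χ (q.1 + q.2.1 - q.2.2.1 - q.2.2.2) := by
    intro χ
    rw [habs4]
    simp only [map_sum]
    have hassoc : (∑ x : A, t x * χ x) * (∑ x : A, t x * χ x) * (∑ x : A, c (t x * χ x)) *
          (∑ x : A, c (t x * χ x))
        = (∑ x : A, t x * χ x) * ((∑ x : A, t x * χ x) *
          ((∑ x : A, c (t x * χ x)) * (∑ x : A, c (t x * χ x)))) := by ring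
    rw [hassoc]
    simp_rw [Finset.sum_mul, Finset.mul_sum, Fintype.sum_prod_type]
    refine Finset.sum_congr rfl fun x1 _ => Finset.sum_congr rfl fun x2 _ =>
      Finset.sum_congr rfl fun x3 _ => Finset.sum_congr rfl fun x4 _ => ?_
    rw [hterm_def]
    simp only [map_mul]
    rw [← hchi χ x1 x2 x3 x4]
    ring
  -- sum over characters
  have hsum : (((∑ χ : AddChar A ℂ, ‖∑ x : A, t x * χ x‖ ^ 4 : ℝ)) : ℂ)
      = (Fintype.card A : ℂ) *
        ∑ q ∈ Finset.univ.filter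
            (fun q : A × A × A × A => q.1 + q.2.1 - q.2.2.1 - q.2.2.2 = 0), term q := by
    push_cast [expand]
    rw [Finset.sum_comm]
    rw [Finset.mul_sum, Finset.sum_filter]
    refine Finset.sum_congr rfl fun q _ => ?_
    rw [← Finset.mul_sum, AddChar.sum_apply_eq_ite]
    split_ifs with h
    · ring
    · simp
  -- the two parametrizing images
  set D1 : Finset (A × A × A × A) :=
    Finset.univ.image (fun p : A × A => (p.1, p.2, p.1, p.2)) with hD1
  set D2 : Finset (A × A × A × A) :=
    Finset.univ.image (fun p : A × A => (p.1, p.2, p.2, p.1)) with hD2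
  have hinj1 : Function.Injective (fun p : A × A => (p.1, p.2, p.1, p.2)) := by
    intro p q h
    simp only [Prod.mk.injEq] at h
    exact Prod.ext h.1 h.2.1
  have hinj2 : Function.Injective (fun p : A × A => (p.1, p.2, p.2, p.1)) := by
    intro p q h
    simp only [Prod.mk.injEq] at h
    exact Prod.ext h.1 h.2.1
  have hsub : D1 ∪ D2 ⊆ Finset.univ.filter
      (fun q : A × A × A × A => q.1 + q.2.1 - q.2.2.1 - q.2.2.2 = 0) := by
    intro q hq
    simp only [hD1, hD2, Finset.mem_union, Finset.mem_image, Finset.mem_univ, true_and] at hq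
    rw [Finset.mem_filter]
    refine ⟨Finset.mem_univ _, ?_⟩
    rcases hq with ⟨p, rfl⟩ | ⟨p, rfl⟩ <;> abel
  have hvanish : ∀ q ∈ Finset.univ.filter
      (fun q : A × A × A × A => q.1 + q.2.1 - q.2.2.1 - q.2.2.2 = 0),
      q ∉ D1 ∪ D2 → term q = 0 := by
    rintro ⟨x1, x2, x3, x4⟩ hq hmem
    rw [Finset.mem_filter] at hq
    have heq : x1 + x2 = x3 + x4 := by
      have := hq.2
      simp only at this
      linear_combination (norm := abel) this
    by_contra hne
    have h1 : t x1 ≠ 0 := fun h => hne (by simp [hterm_def, h])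
    have h2 : t x2 ≠ 0 := fun h => hne (by simp [hterm_def, h])
    have h3 : t x3 ≠ 0 := fun h => hne (by simp [hterm_def, h])
    have h4 : t x4 ≠ 0 := fun h => hne (by simp [hterm_def, h])
    have hS1 : x1 ∈ S := by by_contra h; exact h1 (ht _ h)
    have hS2 : x2 ∈ S := by by_contra h; exact h2 (ht _ h)
    have hS3 : x3 ∈ S := by by_contra h; exact h3 (ht _ h)
    have hS4 : x4 ∈ S := by by_contra h; exact h4 (ht _ h)
    apply hmem
    simp only [hD1, hD2, Finset.mem_union, Finset.mem_image, Finset.mem_univ, true_and]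
    rcases hSidon x1 hS1 x2 hS2 x3 hS3 x4 hS4 heq with h | h
    · left
      refine ⟨(x1, x2), ?_⟩
      have : x2 = x4 := by
        subst h
        exact add_left_cancel heq
      simp [h, this]
    · right
      refine ⟨(x1, x2), ?_⟩
      have : x2 = x3 := by
        subst h
        have : x2 + x1 = x3 + x1 := by linear_combination (norm := abel) heq
        exact add_right_cancel this
      simp [h, this]
  have hfilter : ∑ q ∈ Finset.univ.filter
      (fun q : A × A × A × A => q.1 + q.2.1 - q.2.2.1 - q.2.2.2 = 0), term q
      = ∑ q ∈ D1 ∪ D2, term q :=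
    (Finset.sum_subset hsub hvanish).symm
  -- intersection is the diagonal
  have hinter : D1 ∩ D2 = Finset.univ.image (fun a : A => (a, a, a, a)) := by
    ext q
    simp only [hD1, hD2, Finset.mem_inter, Finset.mem_image, Finset.mem_univ, true_and]
    constructor
    · rintro ⟨⟨p, rfl⟩, ⟨p', hp'⟩⟩
      simp only [Prod.mk.injEq] at hp'
      obtain ⟨h1, h2, h3, h4⟩ := hp'
      have hpq : p.1 = p.2 := by rw [← h3, h2]
      exact ⟨p.1, by rw [hpq]⟩
    · rintro ⟨a, rfl⟩
      exact ⟨⟨(a, a), rfl⟩, ⟨(a, a), rfl⟩⟩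
  have hdiaginj : Function.Injective (fun a : A => (a, a, a, a)) := by
    intro a b h; simpa using congrArg (·.1) h
  have hsum1 : ∑ q ∈ D1, term q = (∑ x : A, t x * c (t x)) ^ 2 := by
    rw [hD1, Finset.sum_image (fun p _ q _ h => hinj1 h), sq, Finset.sum_mul_sum,
      Fintype.sum_prod_type]
    refine Finset.sum_congr rfl fun a _ => Finset.sum_congr rfl fun b _ => ?_
    simp only [hterm_def]
    ring
  have hsum2 : ∑ q ∈ D2, term q = (∑ x : A, t x * c (t x)) ^ 2 := by
    rw [hD2, Finset.sum_image (fun p _ q _ h => hinj2 h), sq, Finset.sum_mul_sum,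
      Fintype.sum_prod_type]
    refine Finset.sum_congr rfl fun a _ => Finset.sum_congr rfl fun b _ => ?_
    simp only [hterm_def]
    ring
  have hsumd : ∑ q ∈ D1 ∩ D2, term q = ∑ x : A, (t x * c (t x)) ^ 2 := by
    rw [hinter, Finset.sum_image (fun p _ q _ h => hdiaginj h)]
    refine Finset.sum_congr rfl fun a _ => ?_
    simp only [hterm_def]
    ring
  have hunion : ∑ q ∈ D1 ∪ D2, term q
      = 2 * (∑ x : A, t x * c (t x)) ^ 2 - ∑ x : A, (t x * c (t x)) ^ 2 := by
    have := Finset.sum_union_inter (s₁ := D1) (s₂ := D2) (f := term)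
    rw [hsumd, hsum1, hsum2] at this
    linear_combination this
  have hmc : ∀ x : A, t x * c (t x) = ((‖t x‖ ^ 2 : ℝ) : ℂ) := by
    intro x
    rw [Complex.mul_conj, ← Complex.normSq_eq_norm_sq]
  have hfinal : (((∑ χ : AddChar A ℂ, ‖∑ x : A, t x * χ x‖ ^ 4 : ℝ)) : ℂ)
      = (((Fintype.card A : ℝ) *
          (2 * (∑ x : A, ‖t x‖ ^ 2) ^ 2 - ∑ x : A, ‖t x‖ ^ 4) : ℝ) : ℂ) := by
    rw [hsum, hfilter, hunion]
    have h2 : ∀ x : A, (((‖t x‖ ^ 2 : ℝ)) : ℂ) ^ 2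
        = (((‖t x‖ ^ 4 : ℝ)) : ℂ) := by
      intro x; push_cast; ring
    simp_rw [hmc, h2]
    push_cast
    ring
  have hfinal' := Complex.ofReal_inj.mp hfinal
  rw [hfinal']
  have hcard : (Fintype.card A : ℝ) ≠ 0 := Nat.cast_ne_zero.mpr Fintype.card_ne_zero
  field_simp
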